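/- arXiv:2502.02014 — 5 statements merged into one kernel-verified Lean document; each statement's English description precedes it below -/
import Mathlib

section
/- Let D ⊆ ℝⁿ be an open set containing the origin, let f : ℝⁿ → ℝⁿ be locally Lipschitz with f(0) = 0, and let V : ℝⁿ → ℝ be continuously differentiable on D with V(0) = 0, V(x) > 0 for all x ∈ D \ {0}, and Lie derivative L_f V(x) = ∑ᵢ (∂V/∂xᵢ)(x) · fᵢ(x) < 0 for all x ∈ D \ {0}. Then the origin is an asymptotically stable equilibrium of the system ẋ = f(x): for every ε > 0 there exists δ > 0 such that every solution x(·) of ẋ = f(x) with ‖x(0)‖ < δ satisfies ‖x(t)‖ < ε for all t ≥ 0, and moreover δ can be chosen so that ‖x(0)‖ < δ implies x(t) → 0 as t → ∞. -/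
/-- **Lyapunov's theorem on asymptotic stability.**
If `D ⊆ ℝⁿ` is open with `0 ∈ D`, `f` is locally Lipschitz with `f 0 = 0`,
and `V` is continuously differentiable on `D` with `V 0 = 0`, `V > 0` on `D \ {0}`,
and Lie derivative `L_f V = ∑ i, ∂V/∂xᵢ · fᵢ < 0` on `D \ {0}`, then the origin is
an asymptotically stable equilibrium of `ẋ = f x`. -/
theorem lyapunov_asymptotic_stability
    (n : ℕ) (D : Set (EuclideanSpace ℝ (Fin n)))
    (hD : IsOpen D) (h0D : (0 : EuclideanSpace ℝ (Fin n)) ∈ D)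
    (f : EuclideanSpace ℝ (Fin n) → EuclideanSpace ℝ (Fin n))
    (hf : LocallyLipschitz f) (hf0 : f 0 = 0)
    (V : EuclideanSpace ℝ (Fin n) → ℝ)
    (hV : ContDiffOn ℝ 1 V D) (hV0 : V 0 = 0)
    (hVpos : ∀ x ∈ D, x ≠ 0 → 0 < V x)
    (hVdec : ∀ x ∈ D, x ≠ 0 →
      (∑ i, fderiv ℝ V x (EuclideanSpace.single i 1) * f x i) < 0) :
    ∀ ε > 0, ∃ δ > 0, ∀ x : ℝ → EuclideanSpace ℝ (Fin n),
      (∀ t ≥ (0:ℝ), HasDerivAt x (f (x t)) t) → ‖x 0‖ < δ →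
        (∀ t ≥ (0:ℝ), ‖x t‖ < ε) ∧ Filter.Tendsto x Filter.atTop (nhds 0) := by
  intro ε hε
  rcases Nat.eq_zero_or_pos n with hn | hn
  · -- trivial case n = 0
    subst hn
    refine ⟨1, one_pos, fun x _ _ => ?_⟩
    have hx0 : ∀ t, x t = 0 := fun t => Subsingleton.elim _ _
    constructor
    · intro t _; simp [hx0 t, hε]
    · have : x = fun _ => 0 := funext hx0
      rw [this]; exact tendsto_const_nhds
  have : Nonempty (Fin n) := ⟨⟨0, hn⟩⟩
  have hnt : Nontrivial (EuclideanSpace ℝ (Fin n)) := inferInstance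
  -- the Lie derivative as a function
  set W : EuclideanSpace ℝ (Fin n) → ℝ := fun y => ∑ i, fderiv ℝ V y (EuclideanSpace.single i 1) * f y i with hW
  -- V is differentiable at points of D
  have hVdiff : ∀ y ∈ D, HasFDerivAt V (fderiv ℝ V y) y := fun y hy =>
    ((hV.contDiffAt (hD.mem_nhds hy)).differentiableAt one_ne_zero).hasFDerivAt
  -- identify the Lie derivative
  have hkey : ∀ y : EuclideanSpace ℝ (Fin n), (fderiv ℝ V y) (f y) = W y := by
    intro y
    have hdecomp : f y = ∑ i, f y i • EuclideanSpace.single i 1 := by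
      ext j; rw [WithLp.ofLp_sum, Finset.sum_apply]; simp [EuclideanSpace.single_apply]
    conv_lhs => rw [hdecomp]
    rw [map_sum]
    simp [smul_eq_mul, mul_comm, hW]
  -- W ≤ 0 on D
  have hWle : ∀ y ∈ D, W y ≤ 0 := by
    intro y hy
    by_cases h : y = 0
    · subst h
      simp [hW, hf0]
    · exact le_of_lt (hVdec y hy h)
  -- V ≥ 0 on D
  have hVnn : ∀ y ∈ D, 0 ≤ V y := by
    intro y hy
    by_cases h : y = 0
    · subst h; simp [hV0]
    · exact le_of_lt (hVpos y hy h)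
  -- continuity of W on D
  have hWcont : ContinuousOn W D := by
    apply continuousOn_finset_sum
    intro i _
    exact (((hV.continuousOn_fderiv_of_isOpen hD le_rfl).clm_apply continuousOn_const)).mul
      (((EuclideanSpace.proj i).continuous.comp hf.continuous).continuousOn)
  -- monotonicity helper
  have anti : ∀ (x : ℝ → EuclideanSpace ℝ (Fin n)), (∀ t ≥ (0:ℝ), HasDerivAt x (f (x t)) t) →
      ∀ (s : Set ℝ), Convex ℝ s → s ⊆ Set.Ici (0:ℝ) → (∀ t ∈ s, x t ∈ D) →
      ∀ (k : ℝ), (∀ t ∈ s, W (x t) + k ≤ 0) →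
      AntitoneOn (fun t => V (x t) + k * t) s := by
    intro x hx s hconv hs hxD k hk
    have hderiv : ∀ t ∈ s, HasDerivAt (fun t => V (x t) + k * t) (W (x t) + k) t := by
      intro t ht
      have h1 : HasDerivAt (fun t => V (x t)) (W (x t)) t := by
        have := (hVdiff (x t) (hxD t ht)).comp_hasDerivAt t (hx t (hs ht))
        rwa [hkey] at this
      have h2 : HasDerivAt (fun t : ℝ => k * t) k t := by
        simpa using (hasDerivAt_id t).const_mul k
      exact h1.add h2
    apply antitoneOn_of_deriv_nonpos hconv
    · exact fun t ht => (hderiv t ht).continuousAt.continuousWithinAt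
    · exact fun t ht => (hderiv t (interior_subset ht)).differentiableAt.differentiableWithinAt
    · intro t ht
      rw [(hderiv t (interior_subset ht)).deriv]
      exact hk t (interior_subset ht)

  -- choose a radius r with closedBall 0 r ⊆ D and r < ε
  obtain ⟨r0, hr0pos, hr0sub⟩ : ∃ r > 0, Metric.closedBall (0:EuclideanSpace ℝ (Fin n)) r ⊆ D := by
    rcases Metric.nhds_basis_closedBall.mem_iff.mp (hD.mem_nhds h0D) with ⟨r, hr, hsub⟩
    exact ⟨r, hr, hsub⟩
  set r := min r0 (ε/2) with hrdef
  have hrpos : 0 < r := lt_min hr0pos (by linarith)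
  have hrε : r < ε := lt_of_le_of_lt (min_le_right _ _) (by linarith)
  have hrsub : Metric.closedBall (0:EuclideanSpace ℝ (Fin n)) r ⊆ D :=
    (Metric.closedBall_subset_closedBall (min_le_left _ _)).trans hr0sub
  -- minimum of V on the sphere of radius r
  have hsubD : Metric.sphere (0:EuclideanSpace ℝ (Fin n)) r ⊆ D :=
    Metric.sphere_subset_closedBall.trans hrsub
  obtain ⟨y0, hy0, hy0min⟩ := (isCompact_sphere (0:EuclideanSpace ℝ (Fin n)) r).exists_isMinOn
    (NormedSpace.sphere_nonempty.mpr hrpos.le) (hV.continuousOn.mono hsubD)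
  set m := V y0 with hm
  have hy0norm : ‖y0‖ = r := by simpa [dist_zero_right] using (Metric.mem_sphere.mp hy0)
  have hy0ne : y0 ≠ 0 := by
    intro h
    rw [h, norm_zero] at hy0norm
    exact (ne_of_gt hrpos) hy0norm.symm
  have hmpos : 0 < m := hVpos y0 (hsubD hy0) hy0ne
  set c := m / 2 with hc
  -- choose δ by continuity of V at 0
  have hVc : ContinuousAt V 0 := hV.continuousOn.continuousAt (hD.mem_nhds h0D)
  obtain ⟨δ0, hδ0pos, hδ0⟩ := Metric.continuousAt_iff.mp hVc c (by positivity)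
  set δ := min δ0 r with hδdef
  have hδpos : 0 < δ := lt_min hδ0pos hrpos
  refine ⟨δ, hδpos, fun x hx hx0 => ?_⟩
  have hcont : ∀ t ≥ (0:ℝ), ContinuousAt x t := fun t ht => (hx t ht).continuousAt
  have hVx0 : V (x 0) < c := by
    have h1 : dist (x 0) 0 < δ0 := by
      rw [dist_zero_right]; exact lt_of_lt_of_le hx0 (min_le_left _ _)
    have := hδ0 h1
    rw [hV0, Real.dist_eq, sub_zero] at this
    exact lt_of_le_of_lt (le_abs_self _) this
  have hx0r : ‖x 0‖ < r := lt_of_lt_of_le hx0 (min_le_right _ _)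
  -- invariance of the ball of radius r
  have hinv : ∀ t ≥ (0:ℝ), ‖x t‖ < r := by
    by_contra hcon
    push_neg at hcon
    obtain ⟨t₂, ht₂0, ht₂⟩ := hcon
    set S := Set.Ici (0:ℝ) ∩ (fun t => ‖x t‖) ⁻¹' Set.Ici r with hS
    have hSne : S.Nonempty := ⟨t₂, ht₂0, ht₂⟩
    have hSbdd : BddBelow S := ⟨0, fun t ht => ht.1⟩
    have hScl : IsClosed S := by
      have hcOn : ContinuousOn (fun t => ‖x t‖) (Set.Ici (0:ℝ)) :=
        fun t ht => ((hcont t ht).norm).continuousWithinAt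
      exact hcOn.preimage_isClosed_of_isClosed isClosed_Ici isClosed_Ici
    set t₁ := sInf S with ht₁def
    have ht₁S : t₁ ∈ S := hScl.csInf_mem hSne hSbdd
    have ht₁0 : 0 ≤ t₁ := ht₁S.1
    have ht₁r : r ≤ ‖x t₁‖ := ht₁S.2
    have ht₁pos : 0 < t₁ := by
      rcases eq_or_lt_of_le ht₁0 with h | h
      · exfalso; rw [← h] at ht₁r; linarith
      · exact h
    have hlt : ∀ s ∈ Set.Ico (0:ℝ) t₁, ‖x s‖ < r := by
      intro s hs
      by_contra hge
      push_neg at hge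
      exact absurd (csInf_le hSbdd ⟨hs.1, hge⟩) (not_le.mpr hs.2)
    have ht₁le : ‖x t₁‖ ≤ r := by
      have hne : (Set.Ico (0:ℝ) t₁).Nonempty := ⟨0, le_refl 0, ht₁pos⟩
      have hcl : t₁ ∈ closure (Set.Ico (0:ℝ) t₁) := by
        rw [closure_Ico (ne_of_lt ht₁pos)]
        exact Set.right_mem_Icc.mpr ht₁0
      have hnb : (nhdsWithin t₁ (Set.Ico (0:ℝ) t₁)).NeBot :=
        mem_closure_iff_nhdsWithin_neBot.mp hcl
      have htend : Filter.Tendsto (fun s => ‖x s‖) (nhdsWithin t₁ (Set.Ico (0:ℝ) t₁))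
          (nhds ‖x t₁‖) := ((hcont t₁ ht₁0).norm).continuousWithinAt
      exact le_of_tendsto htend (Filter.eventually_of_mem self_mem_nhdsWithin
        (fun s hs => (hlt s hs).le))
    have ht₁eq : ‖x t₁‖ = r := le_antisymm ht₁le ht₁r
    have hxDloc : ∀ s ∈ Set.Icc (0:ℝ) t₁, x s ∈ D := by
      intro s hs
      apply hrsub
      rw [Metric.mem_closedBall, dist_zero_right]
      rcases eq_or_lt_of_le hs.2 with h | h
      · rw [h, ht₁eq]
      · exact (hlt s ⟨hs.1, h⟩).le
    have hmono := anti x hx (Set.Icc 0 t₁) (convex_Icc _ _)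
      (fun s hs => hs.1) hxDloc 0
      (fun s hs => by simpa using hWle (x s) (hxDloc s hs))
    have h1 : V (x t₁) + 0 * t₁ ≤ V (x 0) + 0 * 0 :=
      hmono (Set.left_mem_Icc.mpr ht₁0) (Set.right_mem_Icc.mpr ht₁0) ht₁0
    simp only [zero_mul, add_zero] at h1
    have h2 : m ≤ V (x t₁) := hy0min (by rw [Metric.mem_sphere, dist_zero_right]; exact ht₁eq)
    rw [hc] at hVx0
    linarith
  have hxD : ∀ t ≥ (0:ℝ), x t ∈ D := fun t ht => hrsub (by
    rw [Metric.mem_closedBall, dist_zero_right]; exact (hinv t ht).le)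
  have hanti : AntitoneOn (fun t => V (x t)) (Set.Ici 0) := by
    have := anti x hx (Set.Ici 0) (convex_Ici 0) subset_rfl hxD 0
      (fun s hs => by simpa using hWle (x s) (hxD s hs))
    simpa using this
  refine ⟨fun t ht => lt_trans (hinv t ht) hrε, ?_⟩
  -- convergence to 0
  set g : ℝ → ℝ := fun t => V (x (max t 0)) with hg
  have hganti : Antitone g := by
    intro a b hab
    exact hanti (Set.mem_Ici.mpr (le_max_right a 0)) (Set.mem_Ici.mpr (le_max_right b 0))
      (max_le_max hab le_rfl)
  have hgnn : ∀ t, 0 ≤ g t := fun t => hVnn _ (hxD _ (le_max_right _ _))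
  have hbdd : BddBelow (Set.range g) := ⟨0, by rintro _ ⟨t, rfl⟩; exact hgnn t⟩
  set L := ⨅ t, g t with hLdef
  have hLtend : Filter.Tendsto g Filter.atTop (nhds L) := tendsto_atTop_ciInf hganti hbdd
  have hL0 : 0 ≤ L := le_ciInf hgnn
  have hLle : ∀ t, L ≤ g t := fun t => ciInf_le hbdd t
  have hgt : ∀ t ≥ (0:ℝ), g t = V (x t) := by
    intro t ht; rw [hg]; simp [max_eq_left ht]
  have hLzero : L = 0 := by
    by_contra hLne
    have hLpos : 0 < L := lt_of_le_of_ne hL0 (Ne.symm hLne)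
    set K := Metric.closedBall (0:EuclideanSpace ℝ (Fin n)) r ∩ V ⁻¹' Set.Ici L with hK
    have hKD : K ⊆ D := (Set.inter_subset_left).trans hrsub
    have hKcl : IsClosed K :=
      (hV.continuousOn.mono hrsub).preimage_isClosed_of_isClosed
        Metric.isClosed_closedBall isClosed_Ici
    have hKc : IsCompact K :=
      (isCompact_closedBall _ _).of_isClosed_subset hKcl Set.inter_subset_left
    have hx0K : x 0 ∈ K := by
      constructor
      · rw [Metric.mem_closedBall, dist_zero_right]; exact (hinv 0 le_rfl).le
      · have := hLle 0
        rw [hgt 0 le_rfl] at this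
        exact this
    obtain ⟨y1, hy1K, hy1max⟩ := hKc.exists_isMaxOn ⟨x 0, hx0K⟩ (hWcont.mono hKD)
    have hy1ne : y1 ≠ 0 := by
      intro h
      have : L ≤ V y1 := hy1K.2
      rw [h, hV0] at this
      linarith
    have hy1neg : W y1 < 0 := hVdec y1 (hKD hy1K) hy1ne
    set k := -W y1 with hk
    have hkpos : 0 < k := by rw [hk]; linarith
    have hxK : ∀ t ≥ (0:ℝ), x t ∈ K := by
      intro t ht
      constructor
      · rw [Metric.mem_closedBall, dist_zero_right]; exact (hinv t ht).le
      · have := hLle t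
        rw [hgt t ht] at this
        exact this
    have hanti2 := anti x hx (Set.Ici 0) (convex_Ici 0) subset_rfl hxD k
      (fun s hs => by
        have h1 : W (x s) ≤ W y1 := hy1max (hxK s hs)
        rw [hk]; linarith)
    set T := V (x 0) / k + 1 with hT
    have hT0 : 0 ≤ T := by
      have h0 : 0 ≤ V (x 0) / k := div_nonneg (hVnn _ (hxD 0 le_rfl)) hkpos.le
      rw [hT]; linarith
    have h3 : V (x T) + k * T ≤ V (x 0) + k * 0 :=
      hanti2 (Set.mem_Ici.mpr le_rfl) (Set.mem_Ici.mpr hT0) hT0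
    have h4 : k * T = V (x 0) + k := by
      rw [hT]; field_simp
    have h5 : 0 ≤ V (x T) := hVnn _ (hxD T hT0)
    rw [h4] at h3
    linarith
  rw [hLzero] at hLtend
  rw [Metric.tendsto_nhds]
  intro ρ hρ
  set ρ' := min ρ r with hρ'
  have hρ'pos : 0 < ρ' := lt_min hρ hrpos
  set A := Metric.closedBall (0:EuclideanSpace ℝ (Fin n)) r ∩
    (Metric.ball (0:EuclideanSpace ℝ (Fin n)) ρ')ᶜ with hA
  have hAD : A ⊆ D := (Set.inter_subset_left).trans hrsub
  have hAc : IsCompact A :=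
    (isCompact_closedBall _ _).of_isClosed_subset
      (Metric.isClosed_closedBall.inter (Metric.isOpen_ball).isClosed_compl) Set.inter_subset_left
  have hAne : A.Nonempty := by
    refine ⟨y0, ?_, ?_⟩
    · exact Metric.sphere_subset_closedBall hy0
    · rw [Set.mem_compl_iff, Metric.mem_ball, dist_zero_right, not_lt]
      rw [hy0norm]; exact min_le_right _ _
  obtain ⟨y2, hy2A, hy2min⟩ := hAc.exists_isMinOn hAne (hV.continuousOn.mono hAD)
  have hy2ne : y2 ≠ 0 := by
    intro h
    have := hy2A.2
    rw [h] at this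
    exact this (Metric.mem_ball_self hρ'pos)
  have hmρpos : 0 < V y2 := hVpos y2 (hAD hy2A) hy2ne
  have hev : ∀ᶠ t in Filter.atTop, g t < V y2 := hLtend.eventually_lt_const hmρpos
  filter_upwards [hev, Filter.eventually_ge_atTop (0:ℝ)] with t hgt2 ht0
  rw [dist_zero_right]
  by_contra hge
  push_neg at hge
  have hxtA : x t ∈ A := by
    constructor
    · rw [Metric.mem_closedBall, dist_zero_right]; exact (hinv t ht0).le
    · rw [Set.mem_compl_iff, Metric.mem_ball, dist_zero_right, not_lt]
      exact le_trans (le_trans (min_le_left _ _) hge) (le_refl _)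
  have : V y2 ≤ V (x t) := hy2min hxtA
  rw [hgt t ht0] at hgt2
  linarith [lt_of_le_of_lt this hgt2]
end

section
/- Let α ∈ (0,1) and let p : ℝ × ℝ → ℝ be such that for each parameter θ, r ↦ p(θ, r) is a continuous, strictly positive probability density on ℝ; assume p is continuously differentiable in θ, that for each θ the functions r ↦ (1+|r|)·p(θ,r) and r ↦ (1+|r|)·|∂p/∂θ(θ,r)| are integrable with, locally in θ, an integrable dominating function g(r) ≥ (1+|r|)·|∂p/∂θ(θ,r)|, and let q(θ) be the unique real number satisfying ∫_{q(θ)}^{∞} p(θ, r) dr = α, with θ ↦ q(θ) differentiable. Then the risk-seeking objective J(θ) = (1/α) ∫_{q(θ)}^{∞} r · p(θ, r) dr is differentiable and J'(θ) = (1/α) ∫_{q(θ)}^{∞} (r − q(θ)) · ∂p/∂θ(θ, r) dr. -/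
open MeasureTheory Set Metric

private lemma split_Ioi {f : ℝ → ℝ} (hf : Integrable f) (a b : ℝ) :
    ∫ r in Set.Ioi b, f r = (∫ r in Set.Ioi a, f r) - ∫ r in a..b, f r := by
  rcases le_total a b with h | h
  · rw [intervalIntegral.integral_of_le h, ← Set.Ioc_union_Ioi_eq_Ioi h,
      MeasureTheory.setIntegral_union Set.Ioc_disjoint_Ioi_same measurableSet_Ioi
        hf.integrableOn hf.integrableOn]
    ring
  · rw [intervalIntegral.integral_of_ge h, ← Set.Ioc_union_Ioi_eq_Ioi h,
      MeasureTheory.setIntegral_union Set.Ioc_disjoint_Ioi_same measurableSet_Ioi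
        hf.integrableOn hf.integrableOn]
    ring

private lemma deriv_moving_integral
    (f df : ℝ → ℝ → ℝ) (q : ℝ → ℝ) (θ₀ ε : ℝ) (g : ℝ → ℝ)
    (hf_cont : ∀ θ, Continuous (f θ))
    (hf_int : ∀ θ, Integrable (f θ))
    (hdf_meas : AEStronglyMeasurable (df θ₀) (volume.restrict (Set.Ioi (q θ₀))))
    (hdf : ∀ θ r, HasDerivAt (fun θ' => f θ' r) (df θ r) θ)
    (hε : 0 < ε) (hg : Integrable g)
    (h_bound : ∀ θ, |θ - θ₀| < ε → ∀ r, |df θ r| ≤ g r)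
    (hq_diff : Differentiable ℝ q) :
    HasDerivAt (fun θ => ∫ r in Set.Ioi (q θ), f θ r)
      ((∫ r in Set.Ioi (q θ₀), df θ₀ r) - deriv q θ₀ * f θ₀ (q θ₀)) θ₀ := by
  set c₀ := q θ₀ with hc₀
  -- Step A : differentiation under the integral sign on the fixed domain `Ioi c₀`
  have hA : HasDerivAt (fun θ => ∫ r in Set.Ioi c₀, f θ r)
      (∫ r in Set.Ioi c₀, df θ₀ r) θ₀ := by
    have := (hasDerivAt_integral_of_dominated_loc_of_deriv_le (μ := volume.restrict (Set.Ioi c₀))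
      (F := fun θ r => f θ r) (F' := fun θ r => df θ r) (x₀ := θ₀) (bound := g) (Metric.ball_mem_nhds θ₀ hε)
      (Filter.Eventually.of_forall fun θ => ((hf_cont θ).aestronglyMeasurable).restrict)
      ((hf_int θ₀).restrict) hdf_meas
      (Filter.Eventually.of_forall fun r x hx => by
        simpa [Real.norm_eq_abs] using h_bound x (by simpa [Real.dist_eq] using hx) r)
      (hg.restrict)
      (Filter.Eventually.of_forall fun r x _ => hdf x r)).2
    exact this
  -- Step B1 : FTC part with frozen parameter
  have hB1 : HasDerivAt (fun θ => ∫ x in c₀..(q θ), f θ₀ x) (f θ₀ c₀ * deriv q θ₀) θ₀ := by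
    have hftc : HasDerivAt (fun c => ∫ x in c₀..c, f θ₀ x) (f θ₀ c₀) c₀ :=
      intervalIntegral.integral_hasDerivAt_right ((hf_int θ₀).intervalIntegrable)
        ((hf_cont θ₀).stronglyMeasurable.stronglyMeasurableAtFilter)
        (hf_cont θ₀).continuousAt
    exact hftc.comp θ₀ ((hq_diff θ₀).hasDerivAt)
  -- positivity of g
  have hg0 : ∀ r, 0 ≤ g r := fun r =>
    le_trans (abs_nonneg _) (h_bound θ₀ (by simpa using hε) r)
  -- Step B2 : the error term is o(θ - θ₀)
  have hB2 : HasDerivAt (fun θ => ∫ x in c₀..(q θ), (f θ x - f θ₀ x)) 0 θ₀ := by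
    rw [hasDerivAt_iff_tendsto_slope]
    have hGcont : Continuous fun θ => |∫ x in c₀..(q θ), g x| :=
      ((intervalIntegral.continuous_primitive (fun a b => hg.intervalIntegrable) c₀).comp
        hq_diff.continuous).abs
    have hG0 : Filter.Tendsto (fun θ => |∫ x in c₀..(q θ), g x|) (nhdsWithin θ₀ {θ₀}ᶜ) (nhds 0) := by
      have := hGcont.continuousAt (x := θ₀)
      have h0 : |∫ x in c₀..(q θ₀), g x| = 0 := by simp [hc₀]
      rw [ContinuousAt, h0] at this
      exact this.mono_left nhdsWithin_le_nhds
    apply squeeze_zero_norm' _ hG0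
    filter_upwards [self_mem_nhdsWithin,
      nhdsWithin_le_nhds (Metric.ball_mem_nhds θ₀ hε)] with θ hne hθball
    -- pointwise mean value bound
    have hpt : ∀ x, |f θ x - f θ₀ x| ≤ g x * |θ - θ₀| := by
      intro x
      have := Convex.norm_image_sub_le_of_norm_hasDerivWithin_le
        (f := fun θ' => f θ' x) (f' := fun θ' => df θ' x) (C := g x)
        (s := Metric.ball θ₀ ε)
        (fun y hy => (hdf y x).hasDerivWithinAt)
        (fun y hy => by
          simpa [Real.norm_eq_abs] using h_bound y (by simpa [Real.dist_eq] using hy) x)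
        (convex_ball θ₀ ε) (Metric.mem_ball_self hε) hθball
      simpa [Real.norm_eq_abs] using this
    have hle : ‖∫ x in c₀..(q θ), (f θ x - f θ₀ x)‖ ≤ |∫ x in c₀..(q θ), g x| * |θ - θ₀| := by
      have := intervalIntegral.norm_integral_le_abs_of_norm_le
        (μ := volume) (a := c₀) (b := q θ) (f := fun x => f θ x - f θ₀ x)
        (g := fun x => g x * |θ - θ₀|)
        (Filter.Eventually.of_forall fun t => by simpa [Real.norm_eq_abs] using hpt t)
        ((hg.mul_const _).intervalIntegrable)
      rw [intervalIntegral.integral_mul_const, abs_mul, abs_abs] at this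
      exact this
    rw [Set.mem_compl_iff, Set.mem_singleton_iff] at hne
    have hB20 : (∫ x in c₀..(q θ₀), (f θ₀ x - f θ₀ x)) = 0 := by simp
    have habs : (0:ℝ) < |θ - θ₀| := abs_pos.mpr (sub_ne_zero.mpr hne)
    rw [slope_def_field, hB20, sub_zero, Real.norm_eq_abs, abs_div, div_le_iff₀ habs]
    simpa [Real.norm_eq_abs] using hle
  -- Step B : variable endpoint integral of the moving function
  have hB : HasDerivAt (fun θ => ∫ x in c₀..(q θ), f θ x) (f θ₀ c₀ * deriv q θ₀) θ₀ := by
    have h := hB1.add hB2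
    rw [add_zero] at h
    refine h.congr_of_eventuallyEq (Filter.Eventually.of_forall fun θ => ?_)
    have := intervalIntegral.integral_add (μ := volume) (a := c₀) (b := q θ)
      ((hf_int θ₀).intervalIntegrable) (((hf_int θ).sub (hf_int θ₀)).intervalIntegrable)
    simp only [Pi.sub_apply] at this
    simp only [Pi.add_apply, ← this]
    congr 1
    ext x
    ring
  have heq : (fun θ => ∫ r in Set.Ioi (q θ), f θ r)
      = fun θ => (∫ r in Set.Ioi c₀, f θ r) - ∫ x in c₀..(q θ), f θ x :=
    funext fun θ => split_Ioi (hf_int θ) c₀ (q θ)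
  rw [heq]
  exact (hA.sub hB).congr_deriv (by ring)

/-- **Risk-seeking policy gradient.**
Let `α ∈ (0,1)` and `p θ ·` a continuous strictly positive probability density on `ℝ`,
continuously differentiable in `θ` with ∂p/∂θ = `dp`, satisfying the stated integrability
and local domination conditions.  Let `q θ` be the unique real with
`∫_{q θ}^∞ p θ r dr = α`, assumed differentiable in `θ`.  Then the risk-seeking
objective `J θ = (1/α) ∫_{q θ}^∞ r · p θ r dr` is differentiable, with derivative
`J' θ = (1/α) ∫_{q θ}^∞ (r - q θ) · dp θ r dr`. -/
theorem risk_seeking_policy_gradient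
    (α : ℝ) (hα : α ∈ Set.Ioo (0 : ℝ) 1)
    (p dp : ℝ → ℝ → ℝ)
    (hp_cont : ∀ θ, Continuous (p θ))
    (hp_pos : ∀ θ r, 0 < p θ r)
    (hp_density : ∀ θ, ∫ r, p θ r = 1)
    (hp_C1 : ∀ r, ContDiff ℝ 1 (fun θ => p θ r))
    (hdp : ∀ θ r, HasDerivAt (fun θ' => p θ' r) (dp θ r) θ)
    (hint_p : ∀ θ, Integrable (fun r => (1 + |r|) * p θ r))
    (hint_dp : ∀ θ, Integrable (fun r => (1 + |r|) * |dp θ r|))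
    (hdom : ∀ θ₀, ∃ ε > (0 : ℝ), ∃ g : ℝ → ℝ, Integrable g ∧
      ∀ θ, |θ - θ₀| < ε → ∀ r, (1 + |r|) * |dp θ r| ≤ g r)
    (q : ℝ → ℝ)
    (hq : ∀ θ, ∫ r in Set.Ioi (q θ), p θ r = α)
    (hq_unique : ∀ θ c, (∫ r in Set.Ioi c, p θ r) = α → c = q θ)
    (hq_diff : Differentiable ℝ q) :
    ∀ θ, HasDerivAt (fun θ' => (1 / α) * ∫ r in Set.Ioi (q θ'), r * p θ' r)
      ((1 / α) * ∫ r in Set.Ioi (q θ), (r - q θ) * dp θ r) θ := by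
  intro θ₀
  obtain ⟨ε, hε, g, hg, hbound⟩ := hdom θ₀
  -- measurability of the θ-derivative
  have hdp_meas : ∀ θ, Measurable (dp θ) := by
    intro θ
    apply measurable_of_tendsto_metrizable
      (f := fun n r => (p (θ + ((n : ℝ) + 1)⁻¹) r - p θ r) * ((n : ℝ) + 1))
      (fun n => (((hp_cont _).sub (hp_cont θ)).measurable).mul_const _)
    rw [tendsto_pi_nhds]
    intro r
    have h1 := hasDerivAt_iff_tendsto_slope.mp (hdp θ r)
    have hpos : ∀ n : ℕ, (0 : ℝ) < ((n : ℝ) + 1)⁻¹ := fun n => by positivity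
    have hu : Filter.Tendsto (fun n : ℕ => θ + ((n : ℝ) + 1)⁻¹) Filter.atTop
        (nhdsWithin θ {θ}ᶜ) := by
      rw [tendsto_nhdsWithin_iff]
      constructor
      · have h0 : Filter.Tendsto (fun n : ℕ => ((n : ℝ) + 1)⁻¹) Filter.atTop (nhds 0) := by
          simpa using tendsto_one_div_add_atTop_nhds_zero_nat (𝕜 := ℝ)
        simpa using Filter.Tendsto.const_add θ h0
      · exact Filter.Eventually.of_forall fun n => by
          simp [Set.mem_compl_iff]
          positivity
    have := h1.comp hu
    refine this.congr fun n => ?_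
    rw [Function.comp_apply, slope_def_field, add_sub_cancel_left, div_inv_eq_mul]
  -- integrability facts
  have habs1 : ∀ r : ℝ, (1 : ℝ) ≤ 1 + |r| := fun r => by simp [abs_nonneg]
  have hint_p' : ∀ θ, Integrable (p θ) := fun θ =>
    (hint_p θ).mono (hp_cont θ).aestronglyMeasurable (ae_of_all _ fun r => by
      have h1 := (hp_pos θ r).le
      have h2 := abs_nonneg r
      rw [Real.norm_eq_abs, Real.norm_eq_abs, abs_of_nonneg h1,
        abs_of_nonneg (by positivity : (0:ℝ) ≤ (1 + |r|) * p θ r)]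
      nlinarith)
  have hint_rp : ∀ θ, Integrable (fun r => r * p θ r) := fun θ =>
    (hint_p θ).mono ((measurable_id.mul (hp_cont θ).measurable).aestronglyMeasurable)
      (ae_of_all _ fun r => by
        have h1 := (hp_pos θ r).le
        have h2 := abs_nonneg r
        rw [Real.norm_eq_abs, Real.norm_eq_abs, abs_mul,
          abs_of_nonneg (by positivity : (0:ℝ) ≤ (1 + |r|) * p θ r), abs_of_nonneg h1]
        nlinarith)
  have hint_dp' : ∀ θ, Integrable (dp θ) := fun θ =>
    (hint_dp θ).mono (hdp_meas θ).aestronglyMeasurable (ae_of_all _ fun r => by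
      have h2 := abs_nonneg r
      have h3 := abs_nonneg (dp θ r)
      rw [Real.norm_eq_abs, Real.norm_eq_abs,
        abs_of_nonneg (by positivity : (0:ℝ) ≤ (1 + |r|) * |dp θ r|)]
      nlinarith)
  have hint_rdp : ∀ θ, Integrable (fun r => r * dp θ r) := fun θ =>
    (hint_dp θ).mono ((measurable_id.mul (hdp_meas θ)).aestronglyMeasurable)
      (ae_of_all _ fun r => by
        have h2 := abs_nonneg r
        have h3 := abs_nonneg (dp θ r)
        rw [Real.norm_eq_abs, Real.norm_eq_abs, abs_mul,
          abs_of_nonneg (by positivity : (0:ℝ) ≤ (1 + |r|) * |dp θ r|)]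
        nlinarith)
  -- pointwise bounds by g
  have hbound_dp : ∀ θ, |θ - θ₀| < ε → ∀ r, |dp θ r| ≤ g r := fun θ hθ r => by
    have h3 := abs_nonneg (dp θ r)
    have h2 := abs_nonneg r
    nlinarith [hbound θ hθ r]
  have hbound_rdp : ∀ θ, |θ - θ₀| < ε → ∀ r, |r * dp θ r| ≤ g r := fun θ hθ r => by
    have h3 := abs_nonneg (dp θ r)
    have h2 := abs_nonneg r
    rw [abs_mul]
    nlinarith [hbound θ hθ r]
  -- derivative of the quantile constraint
  have H1 := deriv_moving_integral p dp q θ₀ ε g hp_cont hint_p'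
    ((hdp_meas θ₀).aestronglyMeasurable.restrict) hdp hε hg hbound_dp hq_diff
  have hconst : HasDerivAt (fun θ' => ∫ r in Set.Ioi (q θ'), p θ' r) 0 θ₀ := by
    have hfn : (fun θ' => ∫ r in Set.Ioi (q θ'), p θ' r) = fun _ => α := funext hq
    rw [hfn]; exact hasDerivAt_const θ₀ α
  have hI : (∫ r in Set.Ioi (q θ₀), dp θ₀ r) = deriv q θ₀ * p θ₀ (q θ₀) := by
    have := H1.unique hconst
    linarith [this]
  -- derivative of the objective numerator
  have H2 := deriv_moving_integral (fun θ r => r * p θ r) (fun θ r => r * dp θ r) q θ₀ ε g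
    (fun θ => continuous_id.mul (hp_cont θ)) hint_rp
    ((measurable_id.mul (hdp_meas θ₀)).aestronglyMeasurable.restrict)
    (fun θ r => (hdp θ r).const_mul r) hε hg hbound_rdp hq_diff
  have key : (∫ r in Set.Ioi (q θ₀), (r - q θ₀) * dp θ₀ r)
      = (∫ r in Set.Ioi (q θ₀), r * dp θ₀ r) - deriv q θ₀ * ((q θ₀) * p θ₀ (q θ₀)) := by
    have hfn : (fun r => (r - q θ₀) * dp θ₀ r)
        = fun r => r * dp θ₀ r - q θ₀ * dp θ₀ r := funext fun r => by ring
    rw [hfn, MeasureTheory.integral_sub ((hint_rdp θ₀).restrict)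
      (((hint_dp' θ₀).restrict).const_mul (q θ₀)),
      MeasureTheory.integral_const_mul, hI]
    ring
  rw [key]
  exact H2.const_mul (1 / α)
end

section
/- Consider the two-dimensional polynomial system f(x₁, x₂) = (−5x₁³ − 2x₁x₂², −9x₁⁴ + 3x₁³x₂ − 4x₂³) and let V(x₁, x₂) = 9x₁² + x₂². Then for every (x₁, x₂) with |x₁| ≤ 1 and |x₂| ≤ 1 and (x₁, x₂) ≠ (0,0), one has V(x₁, x₂) > 0 and the Lie derivative satisfies L_f V(x₁, x₂) = −90x₁⁴ − 36x₁²x₂² − 18x₁⁴x₂ + 6x₁³x₂² − 8x₂⁴ < 0. -/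
/-- The Lie derivative `L_f V x = ∑ i, (∂V/∂xᵢ)(x) · fᵢ(x)` of `V : ℝⁿ → ℝ`
along the vector field `f : (Fin n → ℝ) → (Fin n → ℝ)`. -/
noncomputable def lieDeriv {n : ℕ} (V : (Fin n → ℝ) → ℝ)
    (f : (Fin n → ℝ) → (Fin n → ℝ)) (x : Fin n → ℝ) : ℝ :=
  ∑ i, fderiv ℝ V x (Pi.single i 1) * f x i

/-- For the 2-D polynomial system `f(x₁,x₂) = (−5x₁³ − 2x₁x₂², −9x₁⁴ + 3x₁³x₂ − 4x₂³)`
and `V = 9x₁² + x₂²`: on the box `|x₁| ≤ 1`, `|x₂| ≤ 1` minus the origin, `V > 0` and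
`L_f V = −90x₁⁴ − 36x₁²x₂² − 18x₁⁴x₂ + 6x₁³x₂² − 8x₂⁴ < 0`. -/
theorem twoDim_poly_lyapunov :
    ∀ x : Fin 2 → ℝ, |x 0| ≤ 1 → |x 1| ≤ 1 → x ≠ 0 →
      0 < 9 * (x 0) ^ 2 + (x 1) ^ 2 ∧
      lieDeriv (fun y => 9 * (y 0) ^ 2 + (y 1) ^ 2)
        (fun y => ![-5 * (y 0) ^ 3 - 2 * y 0 * (y 1) ^ 2,
                    -9 * (y 0) ^ 4 + 3 * (y 0) ^ 3 * y 1 - 4 * (y 1) ^ 3]) x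
        = -90 * (x 0) ^ 4 - 36 * (x 0) ^ 2 * (x 1) ^ 2 - 18 * (x 0) ^ 4 * x 1
          + 6 * (x 0) ^ 3 * (x 1) ^ 2 - 8 * (x 1) ^ 4 ∧
      -90 * (x 0) ^ 4 - 36 * (x 0) ^ 2 * (x 1) ^ 2 - 18 * (x 0) ^ 4 * x 1
          + 6 * (x 0) ^ 3 * (x 1) ^ 2 - 8 * (x 1) ^ 4 < 0 := by
  intro x h0 h1 hx
  have hne : x 0 ≠ 0 ∨ x 1 ≠ 0 := by
    by_contra h
    push_neg at h
    apply hx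
    funext i
    fin_cases i
    · exact h.1
    · exact h.2
  have hpos : 0 < 9 * (x 0) ^ 2 + (x 1) ^ 2 := by
    rcases hne with h | h
    · have h' : 0 < (x 0) ^ 2 := by positivity
      nlinarith [sq_nonneg (x 1)]
    · have h' : 0 < (x 1) ^ 2 := by positivity
      nlinarith [sq_nonneg (x 0)]
  have hV : HasFDerivAt (fun y : Fin 2 → ℝ => 9 * (y 0) ^ 2 + (y 1) ^ 2)
      ((18 * x 0) • (ContinuousLinearMap.proj 0 : (Fin 2 → ℝ) →L[ℝ] ℝ)
        + (2 * x 1) • (ContinuousLinearMap.proj 1 : (Fin 2 → ℝ) →L[ℝ] ℝ)) x := by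
    have h0' : HasFDerivAt (fun y : Fin 2 → ℝ => y 0)
        (ContinuousLinearMap.proj 0 : (Fin 2 → ℝ) →L[ℝ] ℝ) x :=
      (ContinuousLinearMap.proj 0 : (Fin 2 → ℝ) →L[ℝ] ℝ).hasFDerivAt
    have h1' : HasFDerivAt (fun y : Fin 2 → ℝ => y 1)
        (ContinuousLinearMap.proj 1 : (Fin 2 → ℝ) →L[ℝ] ℝ) x :=
      (ContinuousLinearMap.proj 1 : (Fin 2 → ℝ) →L[ℝ] ℝ).hasFDerivAt
    have h := ((h0'.mul h0').const_mul (9:ℝ)).add (h1'.mul h1')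
    have hfun : (fun y : Fin 2 → ℝ => 9 * (y 0) ^ 2 + (y 1) ^ 2)
        = fun y : Fin 2 → ℝ => 9 * (y 0 * y 0) + y 1 * y 1 := by
      funext y; ring
    rw [hfun]
    refine h.congr_fderiv ?_
    ext v
    simp [ContinuousLinearMap.proj]
    ring
  have hd := hV.fderiv
  have heq : lieDeriv (fun y => 9 * (y 0) ^ 2 + (y 1) ^ 2)
      (fun y => ![-5 * (y 0) ^ 3 - 2 * y 0 * (y 1) ^ 2,
                  -9 * (y 0) ^ 4 + 3 * (y 0) ^ 3 * y 1 - 4 * (y 1) ^ 3]) x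
      = -90 * (x 0) ^ 4 - 36 * (x 0) ^ 2 * (x 1) ^ 2 - 18 * (x 0) ^ 4 * x 1
        + 6 * (x 0) ^ 3 * (x 1) ^ 2 - 8 * (x 1) ^ 4 := by
    unfold lieDeriv
    rw [Fin.sum_univ_two, hd]
    simp [ContinuousLinearMap.proj, Pi.single_apply]
    ring
  refine ⟨hpos, heq, ?_⟩
  have e0 : (x 0) ^ 2 ≤ 1 := by nlinarith [sq_abs (x 0), sq_nonneg (|x 0| - 1), abs_nonneg (x 0)]
  have e1 : (x 1) ^ 2 ≤ 1 := by nlinarith [sq_abs (x 1), sq_nonneg (|x 1| - 1), abs_nonneg (x 1)]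
  obtain ⟨ha1, ha2⟩ := abs_le.mp h0
  obtain ⟨hb1, hb2⟩ := abs_le.mp h1
  nlinarith [mul_pos hpos hpos,
    mul_nonneg (mul_nonneg (sq_nonneg (x 0)) (sq_nonneg (x 1))) (by linarith : (0:ℝ) ≤ 1 - x 0),
    mul_nonneg (sq_nonneg ((x 0) ^ 2)) (by linarith : (0:ℝ) ≤ 1 + x 1),
    sq_nonneg (x 0), sq_nonneg (x 1), sq_nonneg (x 0 * x 1), sq_nonneg ((x 0) ^ 2)]
end

section
/- Consider the three-dimensional polynomial system f(x₁, x₂, x₃) = (−3x₁³ + 3x₁x₃ − 9x₁, −x₁³ − 5x₂ + 5x₃², −9x₃³) and let V(x₁, x₂, x₃) = 9x₁² + x₂² + x₃². Then for every (x₁, x₂, x₃) with |xᵢ| ≤ 1 for i = 1,2,3 and (x₁, x₂, x₃) ≠ (0,0,0), one has V(x₁, x₂, x₃) > 0 and the Lie derivative satisfies L_f V(x₁, x₂, x₃) = −54x₁⁴ + 54x₁²x₃ − 162x₁² − 2x₁³x₂ − 10x₂² + 10x₂x₃² − 18x₃⁴ < 0. -/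
lemma fderivV (x : Fin 3 → ℝ) (v : Fin 3 → ℝ) :
    fderiv ℝ (fun y : Fin 3 → ℝ => 9 * (y 0) ^ 2 + (y 1) ^ 2 + (y 2) ^ 2) x v
      = 18 * x 0 * v 0 + 2 * x 1 * v 1 + 2 * x 2 * v 2 := by
  have h0 : HasFDerivAt (fun y : Fin 3 → ℝ => y 0)
      (ContinuousLinearMap.proj (R := ℝ) (φ := fun _ : Fin 3 => ℝ) 0) x :=
    (ContinuousLinearMap.proj (R := ℝ) (φ := fun _ : Fin 3 => ℝ) 0).hasFDerivAt
  have h1 : HasFDerivAt (fun y : Fin 3 → ℝ => y 1)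
      (ContinuousLinearMap.proj (R := ℝ) (φ := fun _ : Fin 3 => ℝ) 1) x :=
    (ContinuousLinearMap.proj (R := ℝ) (φ := fun _ : Fin 3 => ℝ) 1).hasFDerivAt
  have h2 : HasFDerivAt (fun y : Fin 3 → ℝ => y 2)
      (ContinuousLinearMap.proj (R := ℝ) (φ := fun _ : Fin 3 => ℝ) 2) x :=
    (ContinuousLinearMap.proj (R := ℝ) (φ := fun _ : Fin 3 => ℝ) 2).hasFDerivAt
  have H : HasFDerivAt (fun y : Fin 3 → ℝ => 9 * (y 0) ^ 2 + (y 1) ^ 2 + (y 2) ^ 2)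
      ((18 * x 0) • ContinuousLinearMap.proj (R := ℝ) (φ := fun _ : Fin 3 => ℝ) 0
        + (2 * x 1) • ContinuousLinearMap.proj (R := ℝ) (φ := fun _ : Fin 3 => ℝ) 1
        + (2 * x 2) • ContinuousLinearMap.proj (R := ℝ) (φ := fun _ : Fin 3 => ℝ) 2) x := by
    have H' := (((h0.mul h0).const_mul (9:ℝ)).add (h1.mul h1)).add (h2.mul h2)
    have hfun : (fun y : Fin 3 → ℝ => 9 * (y 0) ^ 2 + (y 1) ^ 2 + (y 2) ^ 2)
        = fun y : Fin 3 → ℝ => 9 * (y 0 * y 0) + y 1 * y 1 + y 2 * y 2 := by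
      funext y; ring
    rw [hfun]
    refine H'.congr_fderiv ?_
    ext w
    simp [ContinuousLinearMap.proj_apply, ContinuousLinearMap.smul_apply]
    ring
  rw [H.fderiv]
  simp only [ContinuousLinearMap.add_apply, ContinuousLinearMap.smul_apply,
    ContinuousLinearMap.proj_apply, smul_eq_mul]

/-- For the 3-D polynomial system
`f = (−3x₁³ + 3x₁x₃ − 9x₁, −x₁³ − 5x₂ + 5x₃², −9x₃³)` and `V = 9x₁² + x₂² + x₃²`:
on the box `|xᵢ| ≤ 1` minus the origin, `V > 0` and
`L_f V = −54x₁⁴ + 54x₁²x₃ − 162x₁² − 2x₁³x₂ − 10x₂² + 10x₂x₃² − 18x₃⁴ < 0`. -/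
theorem threeDim_poly_lyapunov :
    ∀ x : Fin 3 → ℝ, |x 0| ≤ 1 → |x 1| ≤ 1 → |x 2| ≤ 1 → x ≠ 0 →
      0 < 9 * (x 0) ^ 2 + (x 1) ^ 2 + (x 2) ^ 2 ∧
      lieDeriv (fun y => 9 * (y 0) ^ 2 + (y 1) ^ 2 + (y 2) ^ 2)
        (fun y => ![-3 * (y 0) ^ 3 + 3 * y 0 * y 2 - 9 * y 0,
                    -(y 0) ^ 3 - 5 * y 1 + 5 * (y 2) ^ 2,
                    -9 * (y 2) ^ 3]) x
        = -54 * (x 0) ^ 4 + 54 * (x 0) ^ 2 * x 2 - 162 * (x 0) ^ 2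
          - 2 * (x 0) ^ 3 * x 1 - 10 * (x 1) ^ 2 + 10 * x 1 * (x 2) ^ 2
          - 18 * (x 2) ^ 4 ∧
      -54 * (x 0) ^ 4 + 54 * (x 0) ^ 2 * x 2 - 162 * (x 0) ^ 2
          - 2 * (x 0) ^ 3 * x 1 - 10 * (x 1) ^ 2 + 10 * x 1 * (x 2) ^ 2
          - 18 * (x 2) ^ 4 < 0 := by
  intro x h0 h1 h2 hx
  have hne : x 0 ≠ 0 ∨ x 1 ≠ 0 ∨ x 2 ≠ 0 := by
    by_contra h
    push_neg at h
    apply hx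
    funext i
    fin_cases i <;> simp [h.1, h.2.1, h.2.2]
  have hpos : 0 < 9 * (x 0) ^ 2 + (x 1) ^ 2 + (x 2) ^ 2 := by
    rcases hne with h | h | h
    · nlinarith [sq_nonneg (x 1), sq_nonneg (x 2), mul_self_pos.mpr h]
    · nlinarith [sq_nonneg (x 0), sq_nonneg (x 2), mul_self_pos.mpr h]
    · nlinarith [sq_nonneg (x 0), sq_nonneg (x 1), mul_self_pos.mpr h]
  refine ⟨hpos, ?_, ?_⟩
  · unfold lieDeriv
    rw [Fin.sum_univ_three]
    simp only [fderivV]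
    simp [Pi.single_apply]
    ring
  · have a0 := abs_le.mp h0
    have a1 := abs_le.mp h1
    have a2 := abs_le.mp h2
    rcases hne with h | h | h <;>
    nlinarith [sq_nonneg (x 0), sq_nonneg (x 1), sq_nonneg (x 2),
      sq_nonneg ((x 0)^2), sq_nonneg ((x 2)^2),
      sq_nonneg (x 1 - (x 2)^2), sq_nonneg ((x 0)^3 + x 1),
      mul_nonneg (sq_nonneg (x 0)) (sub_nonneg.mpr a2.2),
      mul_nonneg (mul_nonneg (sub_nonneg.mpr a0.2) (by linarith [a0.1] : (0:ℝ) ≤ 1 + x 0)) (sq_nonneg (x 0)),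
      mul_nonneg (mul_nonneg (sub_nonneg.mpr a2.2) (by linarith [a2.1] : (0:ℝ) ≤ 1 + x 2)) (sq_nonneg (x 2)),
      mul_self_pos.mpr h, mul_pos (mul_self_pos.mpr h) (mul_self_pos.mpr h)]
end

section
/- The origin is an asymptotically stable equilibrium of the damped pendulum system ẋ₁ = x₂, ẋ₂ = −sin x₁ − (1/10)·x₂: for every ε > 0 there exists δ > 0 such that every solution with ‖x(0)‖ < δ satisfies ‖x(t)‖ < ε for all t ≥ 0, and δ can be chosen so that ‖x(0)‖ < δ implies x(t) → 0 as t → ∞. -/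
/-- The damped pendulum vector field `ẋ₁ = x₂`, `ẋ₂ = −sin x₁ − (1/10)x₂` on `ℝ²`. -/
noncomputable def pendulumField (x : EuclideanSpace ℝ (Fin 2)) :
    EuclideanSpace ℝ (Fin 2) :=
  WithLp.toLp 2 ![x 1, -Real.sin (x 0) - (1 / 10) * x 1]

namespace PendulumAux

lemma key1 {a : ℝ} (ha : |a| ≤ 1) : (43/96)*a^2 ≤ 1 - Real.cos a := by
  have h := abs_le.mp (Real.cos_bound ha)
  have h2 : a^2 ≤ 1 := by nlinarith [abs_nonneg a, sq_abs a]
  have h4 : |a|^4 = a^2 * a^2 := by rw [show (4:ℕ) = 2*2 from rfl, pow_mul, sq_abs]; ring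
  nlinarith [h.1, h.2]

lemma key2 {a : ℝ} (ha : |a| ≤ 1) : 1 - Real.cos a ≤ (53/96)*a^2 := by
  have h := abs_le.mp (Real.cos_bound ha)
  have h2 : a^2 ≤ 1 := by nlinarith [abs_nonneg a, sq_abs a]
  have h4 : |a|^4 = a^2 * a^2 := by rw [show (4:ℕ) = 2*2 from rfl, pow_mul, sq_abs]; ring
  nlinarith [h.1, h.2]

lemma key3 {a : ℝ} (ha : |a| ≤ 1) : (3/4)*a^2 ≤ a * Real.sin a := by
  have h := abs_le.mp (Real.sin_bound ha)
  have h2 : a^2 ≤ 1 := by nlinarith [abs_nonneg a, sq_abs a]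
  have h4 : |a|^4 = a^2 * a^2 := by rw [show (4:ℕ) = 2*2 from rfl, pow_mul, sq_abs]; ring
  have haa : -1 ≤ a ∧ a ≤ 1 := abs_le.mp ha
  nlinarith [h.1, h.2, sq_nonneg a, mul_self_nonneg (a^2 - a), mul_self_nonneg (a^2 + a),
    haa.1, haa.2]

/-- lower bound for the Lyapunov function -/
lemma VL {a b : ℝ} (ha : |a| ≤ 1) :
    (1/3)*(a^2+b^2) ≤ 1 - Real.cos a + b^2/2 + (1/20)*(a*b) := by
  nlinarith [key1 ha, sq_nonneg (a+b), sq_nonneg (a-b), sq_nonneg b]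

/-- upper bound -/
lemma VU {a b : ℝ} (ha : |a| ≤ 1) :
    1 - Real.cos a + b^2/2 + (1/20)*(a*b) ≤ (3/5)*(a^2+b^2) := by
  nlinarith [key2 ha, sq_nonneg (a+b), sq_nonneg (a-b)]

/-- derivative bound -/
lemma VD {a b : ℝ} (ha : |a| ≤ 1) :
    -b^2/20 - (1/20)*(a*Real.sin a) - (1/200)*(a*b)
      ≤ -(1/20)*(1 - Real.cos a + b^2/2 + (1/20)*(a*b)) := by
  nlinarith [key2 ha, key3 ha, sq_nonneg (a+b), sq_nonneg (a-b), sq_nonneg (a - 2*b),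
    sq_nonneg (a + 2*b)]

lemma norm_sq_eq (y : EuclideanSpace ℝ (Fin 2)) : ‖y‖^2 = (y 0)^2 + (y 1)^2 := by
  rw [EuclideanSpace.norm_eq, Real.sq_sqrt (by positivity)]
  simp [Fin.sum_univ_two, sq_abs]

lemma abs_comp0_le (y : EuclideanSpace ℝ (Fin 2)) : |y 0| ≤ ‖y‖ := by
  nlinarith [norm_sq_eq y, sq_nonneg (y 1), abs_nonneg (y 0), norm_nonneg y, sq_abs (y 0)]

/-- The Lyapunov function along a trajectory. -/
noncomputable def gfun (x : ℝ → EuclideanSpace ℝ (Fin 2)) (t : ℝ) : ℝ :=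
  1 - Real.cos (x t 0) + (x t 1)^2/2 + (1/20)*(x t 0 * x t 1)

/-- The exponentially rescaled Lyapunov function. -/
noncomputable def hfun (x : ℝ → EuclideanSpace ℝ (Fin 2)) (t : ℝ) : ℝ :=
  gfun x t * Real.exp (t/20)

variable {x : ℝ → EuclideanSpace ℝ (Fin 2)} {t : ℝ}

lemma hasDerivAt_u (hx : HasDerivAt x (pendulumField (x t)) t) :
    HasDerivAt (fun s => x s 0) (x t 1) t := by
  have := (EuclideanSpace.proj (0 : Fin 2)).hasFDerivAt.comp_hasDerivAt t hx
  simp [pendulumField] at this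
  exact this

lemma hasDerivAt_v (hx : HasDerivAt x (pendulumField (x t)) t) :
    HasDerivAt (fun s => x s 1) (-Real.sin (x t 0) - (1/10) * (x t 1)) t := by
  have := (EuclideanSpace.proj (1 : Fin 2)).hasFDerivAt.comp_hasDerivAt t hx
  simp [pendulumField] at this
  exact this.congr_deriv (by norm_num)

lemma hasDerivAt_gfun (hx : HasDerivAt x (pendulumField (x t)) t) :
    HasDerivAt (gfun x)
      (-(x t 1)^2/20 - (1/20)*(x t 0 * Real.sin (x t 0)) - (1/200)*(x t 0 * x t 1)) t := by
  have h1 := hasDerivAt_u hx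
  have h2 := hasDerivAt_v hx
  have c1 : HasDerivAt (fun s => 1 - Real.cos (x s 0))
      (0 - (-Real.sin (x t 0) * (x t 1))) t := (hasDerivAt_const t 1).sub h1.cos
  have c2 : HasDerivAt (fun s => (x s 1)^2/2)
      ((2 * (x t 1)^1 * (-Real.sin (x t 0) - (1/10) * (x t 1)))/2) t := (h2.pow 2).div_const 2
  have c3 : HasDerivAt (fun s => (1/20)*(x s 0 * x s 1))
      ((1/20) * ((x t 1) * (x t 1) + (x t 0) * (-Real.sin (x t 0) - (1/10) * (x t 1)))) t :=
    (h1.mul h2).const_mul (1/20)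
  have := (c1.add c2).add c3
  exact this.congr_deriv (by ring)

lemma hasDerivAt_hfun (hx : HasDerivAt x (pendulumField (x t)) t) :
    HasDerivAt (hfun x)
      ((-(x t 1)^2/20 - (1/20)*(x t 0 * Real.sin (x t 0)) - (1/200)*(x t 0 * x t 1))
          * Real.exp (t/20)
        + gfun x t * (Real.exp (t/20) * (1/20))) t := by
  have he : HasDerivAt (fun s : ℝ => Real.exp (s/20)) (Real.exp (t/20) * (1/20)) t :=
    ((hasDerivAt_id t).div_const 20).exp
  exact (hasDerivAt_gfun hx).mul he

lemma deriv_hfun_nonpos (hx : HasDerivAt x (pendulumField (x t)) t)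
    (hle : |x t 0| ≤ 1) : deriv (hfun x) t ≤ 0 := by
  rw [(hasDerivAt_hfun hx).deriv]
  have hd := VD (a := x t 0) (b := x t 1) hle
  have he : (0:ℝ) < Real.exp (t/20) := Real.exp_pos _
  have : gfun x t = 1 - Real.cos (x t 0) + (x t 1)^2/2 + (1/20)*(x t 0 * x t 1) := rfl
  nlinarith [hd, he]

end PendulumAux

open PendulumAux in
/-- The origin is an asymptotically stable equilibrium of the damped pendulum:
for every `ε > 0` there is `δ > 0` such that every solution with `‖x 0‖ < δ` stays in
the `ε`-ball for all `t ≥ 0` and converges to the origin as `t → ∞`. -/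
theorem pendulum_asymptotically_stable :
    ∀ ε > (0 : ℝ), ∃ δ > (0 : ℝ), ∀ x : ℝ → EuclideanSpace ℝ (Fin 2),
      (∀ t ≥ (0:ℝ), HasDerivAt x (pendulumField (x t)) t) → ‖x 0‖ < δ →
        (∀ t ≥ (0:ℝ), ‖x t‖ < ε) ∧ Filter.Tendsto x Filter.atTop (nhds 0) := by
  intro ε hε
  refine ⟨min (1/2) (ε/2), lt_min (by norm_num) (by positivity), ?_⟩
  intro x hx hx0
  have hδ1 : ‖x 0‖ < 1/2 := lt_of_lt_of_le hx0 (min_le_left _ _)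
  have hδ2 : ‖x 0‖ < ε/2 := lt_of_lt_of_le hx0 (min_le_right _ _)
  have hu0 : |x 0 0| < 1 := lt_of_le_of_lt (abs_comp0_le (x 0)) (by linarith)
  -- invariance: the first coordinate stays in [-1, 1]
  have g0U : gfun x 0 ≤ (3/5) * ‖x 0‖^2 := by
    have := VU (a := x 0 0) (b := x 0 1) hu0.le
    rw [norm_sq_eq]; exact this
  have g0small : gfun x 0 < 3/20 := by
    have h1 : ‖x 0‖^2 < 1/4 := by nlinarith [norm_nonneg (x 0)]
    nlinarith
  have inv : ∀ t, 0 ≤ t → |x t 0| ≤ 1 := by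
    by_contra hcon
    push_neg at hcon
    obtain ⟨t₁, ht₁0, ht₁⟩ := hcon
    set B : Set ℝ := {t | 0 ≤ t ∧ 1 ≤ |x t 0|} with hB
    have hBne : B.Nonempty := ⟨t₁, ht₁0, ht₁.le⟩
    have hBbdd : BddBelow B := ⟨0, fun b hb => hb.1⟩
    have hBclosed : IsClosed B := by
      have hcontu : ContinuousOn (fun t => |x t 0|) (Set.Ici (0:ℝ)) := fun s hs =>
        (((hasDerivAt_u (hx s hs)).continuousAt).abs).continuousWithinAt
      have : B = Set.Ici (0:ℝ) ∩ (fun t => |x t 0|) ⁻¹' Set.Ici (1:ℝ) := by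
        ext s; simp [hB, Set.mem_setOf_eq]
      rw [this]
      exact hcontu.preimage_isClosed_of_isClosed isClosed_Ici isClosed_Ici
    set t₀ := sInf B with ht₀def
    have ht₀B : t₀ ∈ B := hBclosed.csInf_mem hBne hBbdd
    have ht₀0 : 0 ≤ t₀ := ht₀B.1
    have ht₀pos : 0 < t₀ := by
      rcases lt_or_eq_of_le ht₀0 with h | h
      · exact h
      · exfalso; rw [← h] at ht₀B; exact absurd ht₀B.2 (not_le.mpr hu0)
    have hsmall : ∀ s, 0 ≤ s → s < t₀ → |x s 0| < 1 := by
      intro s hs hlt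
      by_contra hge
      exact absurd (csInf_le hBbdd ⟨hs, not_lt.mp hge⟩) (not_le.mpr hlt)
    -- |x t₀ 0| ≤ 1 by continuity from the left
    have hule : |x t₀ 0| ≤ 1 := by
      have htend : Filter.Tendsto (fun s => |x s 0|) (nhdsWithin t₀ (Set.Iio t₀))
          (nhds |x t₀ 0|) :=
        (((hasDerivAt_u (hx t₀ ht₀0)).continuousAt).abs).continuousWithinAt.tendsto
      have hev : ∀ᶠ s in nhdsWithin t₀ (Set.Iio t₀), |x s 0| ≤ 1 := by
        have h1 : ∀ᶠ s in nhdsWithin t₀ (Set.Iio t₀), 0 < s :=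
          Filter.eventually_iff_exists_mem.mpr
            ⟨Set.Ioi 0, nhdsWithin_le_nhds (Ioi_mem_nhds ht₀pos), fun s hs => hs⟩
        have h2 : ∀ᶠ s in nhdsWithin t₀ (Set.Iio t₀), s < t₀ :=
          eventually_mem_nhdsWithin.mono fun s hs => hs
        filter_upwards [h1, h2] with s hs1 hs2
        exact (hsmall s hs1.le hs2).le
      exact le_of_tendsto htend hev
    -- h is antitone on [0, t₀]
    have hmono : AntitoneOn (hfun x) (Set.Icc 0 t₀) := by
      apply antitoneOn_of_deriv_nonpos (convex_Icc 0 t₀)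
      · intro s hs
        exact (hasDerivAt_hfun (hx s hs.1)).continuousAt.continuousWithinAt
      · intro s hs
        rw [interior_Icc] at hs
        exact (hasDerivAt_hfun (hx s hs.1.le)).differentiableAt.differentiableWithinAt
      · intro s hs
        rw [interior_Icc] at hs
        exact deriv_hfun_nonpos (hx s hs.1.le) (hsmall s hs.1.le hs.2).le
    have hle0 : hfun x t₀ ≤ hfun x 0 :=
      hmono (Set.left_mem_Icc.mpr ht₀pos.le) (Set.right_mem_Icc.mpr ht₀pos.le) ht₀pos.le
    have hh0 : hfun x 0 = gfun x 0 := by simp [hfun]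
    have hgL : (1/3) * ((x t₀ 0)^2 + (x t₀ 1)^2) ≤ gfun x t₀ := VL hule
    have hsq1 : (1:ℝ) ≤ (x t₀ 0)^2 := by
      nlinarith [ht₀B.2, sq_abs (x t₀ 0), abs_nonneg (x t₀ 0)]
    have hexp1 : (1:ℝ) ≤ Real.exp (t₀/20) := Real.one_le_exp (by positivity)
    have : hfun x t₀ = gfun x t₀ * Real.exp (t₀/20) := rfl
    nlinarith [hle0, hgL, hsq1, hexp1, sq_nonneg (x t₀ 1), g0small, hh0]
  -- decay: g t ≤ g 0 e^{-t/20}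
  have hmono : AntitoneOn (hfun x) (Set.Ici 0) := by
    apply antitoneOn_of_deriv_nonpos (convex_Ici 0)
    · intro s hs
      exact (hasDerivAt_hfun (hx s hs)).continuousAt.continuousWithinAt
    · intro s hs
      rw [interior_Ici] at hs
      exact (hasDerivAt_hfun (hx s hs.le)).differentiableAt.differentiableWithinAt
    · intro s hs
      rw [interior_Ici] at hs
      exact deriv_hfun_nonpos (hx s hs.le) (inv s hs.le)
  have decay : ∀ t, 0 ≤ t → gfun x t * Real.exp (t/20) ≤ gfun x 0 := by
    intro t ht
    have := hmono Set.self_mem_Ici (Set.mem_Ici.mpr ht) ht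
    simpa [hfun] using this
  have gnonneg : ∀ t, 0 ≤ t → (1/3) * ‖x t‖^2 ≤ gfun x t := by
    intro t ht
    have := VL (a := x t 0) (b := x t 1) (inv t ht)
    rw [norm_sq_eq]; exact this
  have hbound : ∀ t, 0 ≤ t → ‖x t‖^2 ≤ 3 * gfun x 0 * Real.exp (-(t/20)) := by
    intro t ht
    have h1 := decay t ht
    have h2 := gnonneg t ht
    have he : (0:ℝ) < Real.exp (t/20) := Real.exp_pos _
    have hee : Real.exp (-(t/20)) = (Real.exp (t/20))⁻¹ := Real.exp_neg _
    rw [hee]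
    calc ‖x t‖^2 ≤ 3 * gfun x t := by linarith
      _ = 3 * (gfun x t * Real.exp (t/20)) * (Real.exp (t/20))⁻¹ := by
          field_simp
      _ ≤ 3 * gfun x 0 * (Real.exp (t/20))⁻¹ := by
          apply mul_le_mul_of_nonneg_right _ (by positivity)
          nlinarith
  constructor
  · intro t ht
    have h1 := hbound t ht
    have h2 : Real.exp (-(t/20)) ≤ 1 := Real.exp_le_one_iff.mpr (by linarith)
    have h3 : 3 * gfun x 0 * Real.exp (-(t/20)) ≤ 3 * gfun x 0 := by
      have hg0 : 0 ≤ gfun x 0 := by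
        have := gnonneg 0 le_rfl
        nlinarith [sq_nonneg ‖x 0‖]
      nlinarith [Real.exp_pos (-(t/20))]
    have h4 : ‖x t‖^2 < ε^2 := by
      have : 3 * gfun x 0 ≤ (9/5) * ‖x 0‖^2 := by linarith
      nlinarith [norm_nonneg (x 0), hε]
    nlinarith [norm_nonneg (x t), hε]
  · rw [tendsto_zero_iff_norm_tendsto_zero]
    have hT : Filter.Tendsto (fun t : ℝ => 3 * gfun x 0 * Real.exp (-(t/20)))
        Filter.atTop (nhds 0) := by
      have h1 : Filter.Tendsto (fun t : ℝ => -(t/20)) Filter.atTop Filter.atBot := by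
        apply Filter.tendsto_neg_atBot_iff.mpr
        exact Filter.Tendsto.atTop_div_const (by norm_num) Filter.tendsto_id
      have h2 := Real.tendsto_exp_atBot.comp h1
      have := h2.const_mul (3 * gfun x 0)
      simpa only [Function.comp, mul_zero] using this
    have hsq : Filter.Tendsto (fun t => ‖x t‖^2) Filter.atTop (nhds 0) := by
      apply tendsto_of_tendsto_of_tendsto_of_le_of_le' tendsto_const_nhds hT
      · filter_upwards [Filter.eventually_ge_atTop (0:ℝ)] with t _
        positivity
      · filter_upwards [Filter.eventually_ge_atTop (0:ℝ)] with t ht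
        exact hbound t ht
    have := (Real.continuous_sqrt.tendsto 0).comp hsq
    rw [Real.sqrt_zero] at this
    convert this using 2 with t
    simp [Function.comp, Real.sqrt_sq (norm_nonneg (x t))]
end
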